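/- For the map (α, β) ↦ (φ, ξ) given by φ = (α + β - π)/2 and ξ = (sin(Ψ + α) - sin(Ψ + β) + sin(β - α)) / (2 sin Ψ (cos α - cos β)), the Jacobian determinant ∂(φ,ξ)/∂(α,β) equals (1/(4 sin Ψ)) · sin((α - β)/2) / sin((α + β)/2). -/

import Mathlib

open Real

/-- The direction angle `φ` of the chord from `β` to `α`. -/
noncomputable def chordPhi (α β : ℝ) : ℝ := (α + β - π) / 2

/-- The intersection point `ξ` of the chord from `β` to `α` with the segment `[0,1]×{0}`. -/
noncomputable def chordXi (Ψ α β : ℝ) : ℝ :=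
  (Real.sin (Ψ + α) - Real.sin (Ψ + β) + Real.sin (β - α)) /
    (2 * Real.sin Ψ * (Real.cos α - Real.cos β))

theorem chord_change_of_variables_jacobian (Ψ α β : ℝ)
    (hΨ : Ψ ∈ Set.Ioo 0 (π/2)) (hα : α ∈ Set.Ioo (-Ψ) Ψ) (hβ : β ∈ Set.Ioo Ψ π)
    (hcos : Real.cos α ≠ Real.cos β) (hsin : Real.sin ((α + β)/2) ≠ 0) :
    (deriv (fun a => chordPhi a β) α) * (deriv (fun b => chordXi Ψ α b) β)
      - (deriv (fun b => chordPhi α b) β) * (deriv (fun a => chordXi Ψ a β) α)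
      = (1 / (4 * Real.sin Ψ)) * (Real.sin ((α - β)/2) / Real.sin ((α + β)/2)) := by
  have hsΨ : Real.sin Ψ ≠ 0 := by
    have := Real.sin_pos_of_pos_of_lt_pi hΨ.1 (lt_trans hΨ.2 (by linarith [Real.pi_pos]))
    linarith
  have hcc : Real.cos α - Real.cos β ≠ 0 := sub_ne_zero.mpr hcos
  have hD : 2 * Real.sin Ψ * (Real.cos α - Real.cos β) ≠ 0 := by
    exact mul_ne_zero (mul_ne_zero two_ne_zero hsΨ) hcc
  -- derivative of chordPhi in each variable is 1/2
  have hφa : deriv (fun a => chordPhi a β) α = 1/2 := by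
    have h : HasDerivAt (fun a => chordPhi a β) (1/2) α := by
      unfold chordPhi
      simpa using (((hasDerivAt_id α).add_const β).sub_const π).div_const 2
    exact h.deriv
  have hφb : deriv (fun b => chordPhi α b) β = 1/2 := by
    have h : HasDerivAt (fun b => chordPhi α b) (1/2) β := by
      unfold chordPhi
      simpa using (((hasDerivAt_id β).const_add α).sub_const π).div_const 2
    exact h.deriv
  -- derivative of chordXi in β
  have hNβ : HasDerivAt (fun b => Real.sin (Ψ + α) - Real.sin (Ψ + b) + Real.sin (b - α))
      (-(Real.cos (Ψ + β)) + Real.cos (β - α)) β := by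
    have h1 : HasDerivAt (fun b : ℝ => Ψ + b) 1 β := by
      simpa using (hasDerivAt_id β).const_add Ψ
    have h2 : HasDerivAt (fun b : ℝ => b - α) 1 β := by
      simpa using (hasDerivAt_id β).sub_const α
    have h3 := h1.sin
    have h4 := h2.sin
    exact ((h3.const_sub (Real.sin (Ψ + α))).add h4).congr_deriv (by simp)
  have hDβ : HasDerivAt (fun b => 2 * Real.sin Ψ * (Real.cos α - Real.cos b))
      (2 * Real.sin Ψ * Real.sin β) β := by
    have h1 : HasDerivAt (fun b : ℝ => Real.cos α - Real.cos b) (Real.sin β) β := by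
      simpa using (Real.hasDerivAt_cos β).const_sub (Real.cos α)
    simpa [mul_comm, mul_assoc, mul_left_comm] using h1.const_mul (2 * Real.sin Ψ)
  have hξβ : deriv (fun b => chordXi Ψ α b) β =
      ((-(Real.cos (Ψ + β)) + Real.cos (β - α)) * (2 * Real.sin Ψ * (Real.cos α - Real.cos β))
        - (Real.sin (Ψ + α) - Real.sin (Ψ + β) + Real.sin (β - α)) * (2 * Real.sin Ψ * Real.sin β))
        / (2 * Real.sin Ψ * (Real.cos α - Real.cos β))^2 := by
    have h := hNβ.div hDβ hD
    exact h.deriv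
  -- derivative of chordXi in α
  have hNα : HasDerivAt (fun a => Real.sin (Ψ + a) - Real.sin (Ψ + β) + Real.sin (β - a))
      (Real.cos (Ψ + α) + -(Real.cos (β - α))) α := by
    have h1 : HasDerivAt (fun a : ℝ => Ψ + a) 1 α := by
      simpa using (hasDerivAt_id α).const_add Ψ
    have h2 : HasDerivAt (fun a : ℝ => β - a) (-1) α := by
      simpa using (hasDerivAt_id α).const_sub β
    have h3 := h1.sin
    have h4 := h2.sin
    exact ((h3.sub_const (Real.sin (Ψ + β))).add h4).congr_deriv (by simp)
  have hDα : HasDerivAt (fun a => 2 * Real.sin Ψ * (Real.cos a - Real.cos β))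
      (2 * Real.sin Ψ * (-(Real.sin α))) α := by
    have h1 : HasDerivAt (fun a : ℝ => Real.cos a - Real.cos β) (-(Real.sin α)) α := by
      simpa using (Real.hasDerivAt_cos α).sub_const (Real.cos β)
    simpa [mul_comm, mul_assoc, mul_left_comm] using h1.const_mul (2 * Real.sin Ψ)
  have hξα : deriv (fun a => chordXi Ψ a β) α =
      ((Real.cos (Ψ + α) + -(Real.cos (β - α))) * (2 * Real.sin Ψ * (Real.cos α - Real.cos β))
        - (Real.sin (Ψ + α) - Real.sin (Ψ + β) + Real.sin (β - α)) * (2 * Real.sin Ψ * (-(Real.sin α))))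
        / (2 * Real.sin Ψ * (Real.cos α - Real.cos β))^2 := by
    have h := hNα.div hDα hD
    exact h.deriv
  rw [hφa, hφb, hξα, hξβ]
  -- rewrite RHS half angles in terms of full angles
  have hcosab : 1 - Real.cos (α + β) = 2 * Real.sin ((α + β)/2)^2 := by
    have h := Real.cos_two_mul ((α + β)/2)
    rw [show 2*((α + β)/2) = α + β by ring] at h
    have h2 := Real.sin_sq_add_cos_sq ((α + β)/2)
    linarith
  have hab : 1 - Real.cos (α + β) ≠ 0 := by
    rw [hcosab]; positivity
  have hRHS : Real.sin ((α - β)/2) / Real.sin ((α + β)/2)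
      = (Real.cos β - Real.cos α) / (1 - Real.cos (α + β)) := by
    have h1 : Real.cos β - Real.cos α
        = 2 * Real.sin ((α + β)/2) * Real.sin ((α - β)/2) := by
      rw [Real.cos_sub_cos]
      have e1 : (β - α)/2 = -((α - β)/2) := by ring
      have e2 : (β + α)/2 = (α + β)/2 := by ring
      rw [e1, e2, Real.sin_neg]; ring
    rw [h1, hcosab]
    field_simp
  rw [hRHS]
  -- expand composite angles
  rw [Real.sin_add Ψ α, Real.sin_add Ψ β, Real.cos_add Ψ α, Real.cos_add Ψ β,
    Real.sin_sub β α, Real.cos_sub β α, Real.cos_add α β]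
  have p1 := Real.sin_sq_add_cos_sq α
  have p2 := Real.sin_sq_add_cos_sq β
  have p3 := Real.sin_sq_add_cos_sq Ψ
  have habn : 1 - (Real.cos α * Real.cos β - Real.sin α * Real.sin β) ≠ 0 := by
    rw [← Real.cos_add α β]; exact hab
  have habn' : 1 - (Real.cos β * Real.cos α - Real.sin β * Real.sin α) ≠ 0 := by
    intro h; apply habn; linear_combination h
  field_simp
  linear_combination (4*Real.cos α*Real.sin β^2 + -4*Real.sin β^2*Real.cos β + -4*Real.cos Ψ + 4*Real.cos α*Real.cos β*Real.cos Ψ + -4*Real.sin α*Real.sin β*Real.cos Ψ + 4*Real.cos β + -4*Real.cos α*Real.cos β^2 + 4*Real.sin α*Real.sin β*Real.cos β) * p1 + (4*Real.cos Ψ + -4*Real.cos α*Real.cos β*Real.cos Ψ + 4*Real.sin α*Real.sin β*Real.cos Ψ + 8*Real.cos α^2*Real.cos β + -4*Real.sin α*Real.cos α*Real.sin β + -4*Real.cos α^3 + -4*Real.cos β) * p2
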